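/- Let n ≥ 2 and h > 0, and define f on the open positive orthant {w ∈ ℝⁿ : wᵢ > 0 for all i} by f(w) = Σ_{i=1}^{n−1} 2h/(√(w_{i+1}) + √(wᵢ)). Then f is strictly convex on the open positive orthant, and f is strictly decreasing with respect to the componentwise order there: if 0 < w ≤ w′ componentwise and w ≠ w′, then f(w) > f(w′). -/

import Mathlib

open Real

lemma combo_pos {a b t t' : ℝ} (ha : 0 < a) (hb : 0 < b) (ht : 0 ≤ t) (ht' : 0 ≤ t')
    (htt : t + t' = 1) : 0 < t * a + t' * b := by
  rcases ht.lt_or_eq with h | h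
  · have := mul_nonneg ht' hb.le
    nlinarith
  · have : t' = 1 := by linarith
    simp [← h, this, hb]

lemma aux_le (c : ℝ) (hc : 0 < c) {a b a' b' : ℝ} (ha : 0 < a) (hb : 0 < b)
    (ha' : a ≤ a') (hb' : b ≤ b') :
    c / (Real.sqrt a' + Real.sqrt b') ≤ c / (Real.sqrt a + Real.sqrt b) := by
  have h1 : 0 < Real.sqrt a + Real.sqrt b := by positivity
  have h2 : Real.sqrt a + Real.sqrt b ≤ Real.sqrt a' + Real.sqrt b' :=
    add_le_add (Real.sqrt_le_sqrt ha') (Real.sqrt_le_sqrt hb')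
  exact div_le_div_of_nonneg_left hc.le h1 h2 |>.trans_eq rfl

lemma aux_lt (c : ℝ) (hc : 0 < c) {a b a' b' : ℝ} (ha : 0 < a) (hb : 0 < b)
    (hstrict : a < a' ∧ b ≤ b' ∨ a ≤ a' ∧ b < b') :
    c / (Real.sqrt a' + Real.sqrt b') < c / (Real.sqrt a + Real.sqrt b) := by
  have h1 : 0 < Real.sqrt a + Real.sqrt b := by positivity
  have h2 : Real.sqrt a + Real.sqrt b < Real.sqrt a' + Real.sqrt b' := by
    rcases hstrict with ⟨h3, h4⟩ | ⟨h3, h4⟩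
    · exact add_lt_add_of_lt_of_le (Real.sqrt_lt_sqrt ha.le h3) (Real.sqrt_le_sqrt h4)
    · exact add_lt_add_of_le_of_lt (Real.sqrt_le_sqrt h3) (Real.sqrt_lt_sqrt hb.le h4)
  exact div_lt_div_of_pos_left hc h1 h2

lemma inv_cvx {c s s' t t' : ℝ} (hc : 0 ≤ c) (hs : 0 < s) (hs' : 0 < s')
    (ht : 0 < t) (ht' : 0 < t') (htt : t + t' = 1) :
    c / (t * s + t' * s') ≤ t * (c / s) + t' * (c / s') := by
  have hd : 0 < t * s + t' * s' := combo_pos hs hs' ht.le ht'.le htt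
  rw [div_le_iff₀ hd]
  have key : s * s' ≤ (t * s + t' * s') * (t * s' + t' * s) := by
    have h5 : (t * s + t' * s') * (t * s' + t' * s) - s * s' = t * t' * (s - s') ^ 2 := by
      have h6 : t' = 1 - t := by linarith
      rw [h6]; ring
    nlinarith [mul_nonneg (mul_pos ht ht').le (sq_nonneg (s - s'))]
  have h1 : t * (c / s) + t' * (c / s') = c * (t * s' + t' * s) / (s * s') := by
    field_simp
  rw [h1, div_mul_eq_mul_div, le_div_iff₀ (by positivity)]
  nlinarith [mul_nonneg hc (mul_pos hs hs').le]

lemma sqrt_combo_le {a a' t t' : ℝ} (ha : 0 ≤ a) (ha' : 0 ≤ a') (ht : 0 ≤ t) (ht' : 0 ≤ t')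
    (htt : t + t' = 1) :
    t * Real.sqrt a + t' * Real.sqrt a' ≤ Real.sqrt (t * a + t' * a') := by
  have := Real.strictConcaveOn_sqrt.concaveOn.2 (Set.mem_Ici.2 ha) (Set.mem_Ici.2 ha')
    ht ht' htt
  simpa [smul_eq_mul] using this

lemma sqrt_combo_lt {a a' t t' : ℝ} (ha : 0 ≤ a) (ha' : 0 ≤ a') (hne : a ≠ a')
    (ht : 0 < t) (ht' : 0 < t') (htt : t + t' = 1) :
    t * Real.sqrt a + t' * Real.sqrt a' < Real.sqrt (t * a + t' * a') := by
  have := Real.strictConcaveOn_sqrt.2 (Set.mem_Ici.2 ha) (Set.mem_Ici.2 ha') hne ht ht' htt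
  simpa [smul_eq_mul] using this

lemma aux_cvx_le (c : ℝ) (hc : 0 < c) {a b a' b' t t' : ℝ} (ha : 0 < a) (hb : 0 < b)
    (ha' : 0 < a') (hb' : 0 < b') (ht : 0 < t) (ht' : 0 < t') (htt : t + t' = 1) :
    c / (Real.sqrt (t * a + t' * a') + Real.sqrt (t * b + t' * b')) ≤
      t * (c / (Real.sqrt a + Real.sqrt b)) + t' * (c / (Real.sqrt a' + Real.sqrt b')) := by
  set s := Real.sqrt a + Real.sqrt b with hsdef
  set s' := Real.sqrt a' + Real.sqrt b' with hsdef'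
  have hs : 0 < s := by positivity
  have hs' : 0 < s' := by positivity
  have hd : 0 < t * s + t' * s' := combo_pos hs hs' ht.le ht'.le htt
  have h2 : t * s + t' * s' ≤ Real.sqrt (t * a + t' * a') + Real.sqrt (t * b + t' * b') := by
    have h3 := sqrt_combo_le ha.le ha'.le ht.le ht'.le htt
    have h4 := sqrt_combo_le hb.le hb'.le ht.le ht'.le htt
    simp only [hsdef, hsdef']; nlinarith
  calc c / (Real.sqrt (t * a + t' * a') + Real.sqrt (t * b + t' * b'))
      ≤ c / (t * s + t' * s') := div_le_div_of_nonneg_left hc.le hd h2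
    _ ≤ t * (c / s) + t' * (c / s') := inv_cvx hc.le hs hs' ht ht' htt

lemma aux_cvx_lt (c : ℝ) (hc : 0 < c) {a b a' b' t t' : ℝ} (ha : 0 < a) (hb : 0 < b)
    (ha' : 0 < a') (hb' : 0 < b') (ht : 0 < t) (ht' : 0 < t') (htt : t + t' = 1)
    (hne : a ≠ a' ∨ b ≠ b') :
    c / (Real.sqrt (t * a + t' * a') + Real.sqrt (t * b + t' * b')) <
      t * (c / (Real.sqrt a + Real.sqrt b)) + t' * (c / (Real.sqrt a' + Real.sqrt b')) := by
  set s := Real.sqrt a + Real.sqrt b with hsdef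
  set s' := Real.sqrt a' + Real.sqrt b' with hsdef'
  have hs : 0 < s := by positivity
  have hs' : 0 < s' := by positivity
  have hd : 0 < t * s + t' * s' := combo_pos hs hs' ht.le ht'.le htt
  have h2 : t * s + t' * s' < Real.sqrt (t * a + t' * a') + Real.sqrt (t * b + t' * b') := by
    rcases hne with hne | hne
    · have h3 := sqrt_combo_lt ha.le ha'.le hne ht ht' htt
      have h4 := sqrt_combo_le hb.le hb'.le ht.le ht'.le htt
      simp only [hsdef, hsdef']; nlinarith
    · have h3 := sqrt_combo_le ha.le ha'.le ht.le ht'.le htt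
      have h4 := sqrt_combo_lt hb.le hb'.le hne ht ht' htt
      simp only [hsdef, hsdef']; nlinarith
  calc c / (Real.sqrt (t * a + t' * a') + Real.sqrt (t * b + t' * b'))
      < c / (t * s + t' * s') := div_lt_div_of_pos_left hc hd h2
    _ ≤ t * (c / s) + t' * (c / s') := inv_cvx hc.le hs hs' ht ht' htt

/-- The discretized travel-time objective
`f(w) = Σ_{i=1}^{n−1} 2h/(√w_{i+1} + √w_i)` is strictly convex and strictly
componentwise-decreasing on the open positive orthant. -/
theorem stmt_15 (n : ℕ) (hn : 2 ≤ n) (h : ℝ) (hh : 0 < h) :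
    StrictConvexOn ℝ {w : Fin n → ℝ | ∀ i, 0 < w i}
      (fun w => ∑ i : Fin (n - 1),
        2 * h / (Real.sqrt (w ⟨(i : ℕ) + 1, by omega⟩) + Real.sqrt (w ⟨(i : ℕ), by omega⟩)))
    ∧ ∀ w w' : Fin n → ℝ, (∀ i, 0 < w i) → (∀ i, 0 < w' i) → w ≤ w' → w ≠ w' →
        (∑ i : Fin (n - 1),
          2 * h / (Real.sqrt (w' ⟨(i : ℕ) + 1, by omega⟩) + Real.sqrt (w' ⟨(i : ℕ), by omega⟩)))
        < ∑ i : Fin (n - 1),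
          2 * h / (Real.sqrt (w ⟨(i : ℕ) + 1, by omega⟩) + Real.sqrt (w ⟨(i : ℕ), by omega⟩)) := by
  have hc : (0:ℝ) < 2 * h := by linarith
  constructor
  · constructor
    · intro x hx y hy t t' ht ht' htt
      intro i
      simp only [Pi.add_apply, Pi.smul_apply, smul_eq_mul]
      exact combo_pos (hx i) (hy i) ht ht' htt
    · intro x hx y hy hxy t t' ht ht' htt
      simp only [Set.mem_setOf_eq] at hx hy
      obtain ⟨j, hj⟩ : ∃ j, x j ≠ y j := by
        by_contra hX; push_neg at hX; exact hxy (funext hX)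
      simp only [smul_eq_mul, Pi.add_apply, Pi.smul_apply]
      rw [Finset.mul_sum, Finset.mul_sum, ← Finset.sum_add_distrib]
      apply Finset.sum_lt_sum
      · intro i _
        exact aux_cvx_le (2*h) hc (hx _) (hx _) (hy _) (hy _) ht ht' htt
      · by_cases hjk : (j : ℕ) < n - 1
        · refine ⟨⟨(j : ℕ), hjk⟩, Finset.mem_univ _, ?_⟩
          refine aux_cvx_lt (2*h) hc (hx _) (hx _) (hy _) (hy _) ht ht' htt (Or.inr ?_)
          have hidx : (⟨(j : ℕ), by omega⟩ : Fin n) = j := Fin.ext rfl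
          rw [hidx]; exact hj
        · have hj' : (j : ℕ) = n - 1 := by omega
          refine ⟨⟨n - 2, by omega⟩, Finset.mem_univ _, ?_⟩
          refine aux_cvx_lt (2*h) hc (hx _) (hx _) (hy _) (hy _) ht ht' htt (Or.inl ?_)
          have hidx : (⟨n - 2 + 1, by omega⟩ : Fin n) = j := Fin.ext (by simp; omega)
          rw [hidx]; exact hj
  · intro w w' hw hw' hle hne
    obtain ⟨j, hj⟩ : ∃ j, w j ≠ w' j := by
      by_contra hX; push_neg at hX; exact hne (funext hX)
    have hjlt : w j < w' j := lt_of_le_of_ne (hle j) hj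
    apply Finset.sum_lt_sum
    · intro i _
      exact aux_le (2*h) hc (hw _) (hw _) (hle _) (hle _)
    · by_cases hjk : (j : ℕ) < n - 1
      · refine ⟨⟨(j : ℕ), hjk⟩, Finset.mem_univ _, ?_⟩
        refine aux_lt (2*h) hc (hw _) (hw _) (Or.inr ⟨hle _, ?_⟩)
        have hidx : (⟨(j : ℕ), by omega⟩ : Fin n) = j := Fin.ext rfl
        rw [hidx]; exact hjlt
      · have hj' : (j : ℕ) = n - 1 := by omega
        refine ⟨⟨n - 2, by omega⟩, Finset.mem_univ _, ?_⟩
        refine aux_lt (2*h) hc (hw _) (hw _) (Or.inl ⟨?_, hle _⟩)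
        have hidx : (⟨n - 2 + 1, by omega⟩ : Fin n) = j := Fin.ext (by simp; omega)
        rw [hidx]; exact hjlt
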